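/- Let $X$ be a complex Banach space and suppose $\{x_\alpha\} \subseteq S_X$ is a set of uniformly strongly exposed points with exposing functionals $\{x_\alpha^*\}$ and modulus $\delta(\epsilon)$. If $\{z_n\}$ is a sequence in $B_X$ such that $\lim_n \inf_{p > n} |z_n^*(z_p)| = 1$, where $z_n^*$ is the exposing functional of $z_n \in \{x_\alpha\}$, then $\{z_n\}$ has a convergent subsequence. -/

import Mathlib

open Filter

/-- for a uniformly strongly exposed family `S` in a complex Banach
space, a sequence `{z_n} ⊆ S` with `lim_n inf_{p>n} |z_n^*(z_p)| = 1` has a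
convergent subsequence. -/
theorem stmt_8 {X : Type*} [NormedAddCommGroup X] [NormedSpace ℂ X] [CompleteSpace X]
    (S : Set X) (hS : ∀ x ∈ S, ‖x‖ = 1)
    (φ : X → (X →L[ℂ] ℂ))
    (hφ : ∀ x ∈ S, ‖φ x‖ = 1 ∧ φ x x = 1)
    (δ : ℝ → ℝ) (hδ : ∀ ε : ℝ, 0 < ε → 0 < δ ε)
    (hexp : ∀ ε : ℝ, 0 < ε → ∀ x ∈ S, ∀ y : X, ‖y‖ ≤ 1 →
      1 - δ ε ≤ (φ x y).re → ‖y - x‖ ≤ ε)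
    (z : ℕ → X) (hz : ∀ n, z n ∈ S)
    (hcond : Tendsto (fun n => sInf {r : ℝ | ∃ p : ℕ, n < p ∧ r = ‖φ (z n) (z p)‖})
      atTop (nhds 1)) :
    ∃ σ : ℕ → ℕ, StrictMono σ ∧ ∃ z₀ : X, Tendsto (z ∘ σ) atTop (nhds z₀) := by
  -- Key step: each tail lies ε-close to a circle through one of the points.
  have key : ∀ ε : ℝ, 0 < ε → ∃ N : ℕ, ∀ p : ℕ, N < p →
      ∃ θ : ℂ, ‖θ‖ = 1 ∧ ‖z p - θ • z N‖ ≤ ε := by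
    intro ε hε
    have hδε := hδ ε hε
    have hev : ∀ᶠ n in atTop,
        1 - δ ε < sInf {r : ℝ | ∃ p : ℕ, n < p ∧ r = ‖φ (z n) (z p)‖} :=
      hcond.eventually (eventually_gt_nhds (by linarith : 1 - δ ε < 1))
    obtain ⟨N, hN⟩ := hev.exists
    refine ⟨N, fun p hp => ?_⟩
    set c := φ (z N) (z p) with hc
    have hmem : ‖c‖ ∈ {r : ℝ | ∃ q : ℕ, N < q ∧ r = ‖φ (z N) (z q)‖} := ⟨p, hp, rfl⟩
    have hbdd : BddBelow {r : ℝ | ∃ q : ℕ, N < q ∧ r = ‖φ (z N) (z q)‖} :=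
      ⟨0, by rintro r ⟨q, _, rfl⟩; exact norm_nonneg _⟩
    have hcnorm : 1 - δ ε < ‖c‖ := lt_of_lt_of_le hN (csInf_le hbdd hmem)
    by_cases h0 : c = 0
    · refine ⟨1, by simp, ?_⟩
      have hre : 1 - δ ε ≤ (φ (z N) (z p)).re := by
        rw [← hc, h0]
        simp only [Complex.zero_re]
        have : ‖c‖ = 0 := by rw [h0, norm_zero]
        linarith [hcnorm.le.trans this.le]
      have := hexp ε hε (z N) (hz N) (z p) (le_of_eq (hS _ (hz p))) hre
      simpa using this
    · have hcn : (0:ℝ) < ‖c‖ := norm_pos_iff.mpr h0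
      set θ : ℂ := (‖c‖ : ℂ)⁻¹ * c with hθdef
      have hθnorm : ‖θ‖ = 1 := by
        rw [hθdef, norm_mul, norm_inv, Complex.norm_real, Real.norm_eq_abs,
          abs_of_pos hcn]
        exact inv_mul_cancel₀ hcn.ne'
      set y : X := (starRingEnd ℂ θ) • z p with hydef
      have hval : φ (z N) y = (‖c‖ : ℂ) := by
        rw [hydef, map_smul, smul_eq_mul, ← hc, hθdef]
        rw [map_mul, map_inv₀, Complex.conj_ofReal]
        rw [mul_assoc, RCLike.conj_mul, sq, ← mul_assoc]
        have hne : (‖c‖:ℂ) ≠ 0 := by exact_mod_cast hcn.ne'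
        field_simp
        rfl
      have hre : 1 - δ ε ≤ (φ (z N) y).re := by
        rw [hval, Complex.ofReal_re]; linarith
      have hynorm : ‖y‖ ≤ 1 := by
        rw [hydef, norm_smul, RCLike.norm_conj, hθnorm, one_mul]
        exact le_of_eq (hS _ (hz p))
      have hclose : ‖y - z N‖ ≤ ε := hexp ε hε (z N) (hz N) y hynorm hre
      refine ⟨θ, hθnorm, ?_⟩
      have hzy : z p = θ • y := by
        rw [hydef, smul_smul, RCLike.mul_conj, hθnorm]
        norm_num
      calc ‖z p - θ • z N‖ = ‖θ • (y - z N)‖ := by rw [hzy, smul_sub]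
        _ = ‖θ‖ * ‖y - z N‖ := norm_smul _ _
        _ ≤ ε := by rw [hθnorm, one_mul]; exact hclose
  -- Total boundedness of the range.
  have hTB : TotallyBounded (Set.range z) := by
    rw [Metric.totallyBounded_iff]
    intro ε hε
    obtain ⟨N, hN⟩ := key (ε/3) (by linarith)
    have hCcomp : IsCompact ((fun θ : ℂ => θ • z N) '' Metric.sphere 0 1) :=
      (isCompact_sphere (0:ℂ) 1).image (by fun_prop)
    obtain ⟨t, htfin, htsub⟩ :=
      Metric.totallyBounded_iff.mp hCcomp.totallyBounded (ε/3) (by linarith)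
    refine ⟨t ∪ z '' {i | i ≤ N}, htfin.union ((Set.finite_Iic N).image z), ?_⟩
    rintro x ⟨p, rfl⟩
    by_cases hp : p ≤ N
    · refine Set.mem_iUnion₂.mpr ⟨z p, Or.inr ⟨p, hp, rfl⟩, ?_⟩
      simpa using hε
    · push_neg at hp
      obtain ⟨θ, hθ, hdist⟩ := hN p hp
      have hmemC : θ • z N ∈ (fun θ : ℂ => θ • z N) '' Metric.sphere 0 1 :=
        ⟨θ, by simpa using hθ, rfl⟩
      obtain ⟨y, hy, hyball⟩ := Set.mem_iUnion₂.mp (htsub hmemC)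
      refine Set.mem_iUnion₂.mpr ⟨y, Or.inl hy, ?_⟩
      have h1 : dist (z p) (θ • z N) ≤ ε/3 := by
        rw [dist_eq_norm]; exact hdist
      have h2 : dist (θ • z N) y < ε/3 := hyball
      have := dist_triangle (z p) (θ • z N) y
      exact Metric.mem_ball.mpr (by linarith)
  have hcomp : IsCompact (closure (Set.range z)) :=
    hTB.closure.isCompact_of_isClosed isClosed_closure
  obtain ⟨z₀, _, σ, hσ, htend⟩ :=
    hcomp.tendsto_subseq (fun n => subset_closure ⟨n, rfl⟩)
  exact ⟨σ, hσ, z₀, htend⟩
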